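/- Polynomial realization: every polynomial p ∈ F[z₁,…,zₙ] over a field F can be obtained from some affine linear polynomial q (in a possibly larger set of variables) by applying a finite sequence of simple product substitutions, each of which replaces one variable of the current polynomial by a product of two variables. -/

import Mathlib

open MvPolynomial

namespace PolyReal

variable {F : Type*} [Field F] {N n : ℕ}

/-- one substitution step -/
noncomputable def stepFun (N : ℕ) (F : Type*) [Field F] (t : Fin N × Fin N × Fin N) :
    Fin N → MvPolynomial (Fin N) F :=
  fun i => if i = t.1 then (X t.2.1 * X t.2.2 : MvPolynomial (Fin N) F) else X i

noncomputable def fold (L : List (Fin N × Fin N × Fin N)) (q : MvPolynomial (Fin N) F) :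
    MvPolynomial (Fin N) F :=
  L.foldl (fun r t => aeval (stepFun N F t) r) q

@[simp] lemma fold_nil (q : MvPolynomial (Fin N) F) : fold [] q = q := rfl

@[simp] lemma fold_cons (t) (L : List (Fin N × Fin N × Fin N)) (q : MvPolynomial (Fin N) F) :
    fold (t :: L) q = fold L (aeval (stepFun N F t) q) := rfl

lemma fold_mul (L : List (Fin N × Fin N × Fin N)) (a b : MvPolynomial (Fin N) F) :
    fold L (a * b) = fold L a * fold L b := by
  induction L generalizing a b with
  | nil => rfl
  | cons t L ih => simp [fold_cons, map_mul, ih]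

lemma fold_add (L : List (Fin N × Fin N × Fin N)) (a b : MvPolynomial (Fin N) F) :
    fold L (a + b) = fold L a + fold L b := by
  induction L generalizing a b with
  | nil => rfl
  | cons t L ih => simp [fold_cons, map_add, ih]

lemma fold_C (L : List (Fin N × Fin N × Fin N)) (a : F) :
    fold L (C a : MvPolynomial (Fin N) F) = C a := by
  induction L with
  | nil => rfl
  | cons t L ih => simpa [fold_cons, aeval_C, algebraMap_eq] using ih

lemma fold_X_ne (L : List (Fin N × Fin N × Fin N)) (j : Fin N)
    (h : ∀ t ∈ L, t.1 ≠ j) : fold L (X j : MvPolynomial (Fin N) F) = X j := by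
  induction L with
  | nil => rfl
  | cons t L ih =>
    have h1 : t.1 ≠ j := h t (by simp)
    rw [fold_cons, aeval_X, stepFun, if_neg (Ne.symm h1)]
    exact ih fun s hs => h s (by simp [hs])

lemma fold_fix {M : ℕ} (e : Fin M → Fin N) (L : List (Fin N × Fin N × Fin N))
    (h : ∀ t ∈ L, ∀ i, e i ≠ t.1) (q : MvPolynomial (Fin M) F) :
    fold L (rename e q) = rename e q := by
  induction L with
  | nil => rfl
  | cons t L ih =>
    rw [fold_cons, aeval_rename]
    have : stepFun N F t ∘ e = fun i => X (e i) := by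
      funext i
      simp [stepFun, if_neg (h t (by simp) i)]
    rw [this]
    have : (aeval fun i => (X (e i) : MvPolynomial (Fin N) F)) q = rename e q := by
      conv_rhs => rw [← aeval_X_left_apply q]
      rw [← AlgHom.comp_apply, comp_aeval]
      simp only [rename_X]
    rw [this]
    exact ih fun s hs i => h s (by simp [hs]) i

lemma fold_rename {M : ℕ} (e : Fin M → Fin N) (he : Function.Injective e)
    (L : List (Fin M × Fin M × Fin M)) (q : MvPolynomial (Fin M) F) :
    fold (L.map fun t => (e t.1, e t.2.1, e t.2.2)) (rename e q) = rename e (fold L q) := by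
  induction L generalizing q with
  | nil => rfl
  | cons t L ih =>
    rw [List.map_cons, fold_cons, fold_cons, ← ih, aeval_rename]
    congr 1
    have : stepFun N F (e t.1, e t.2.1, e t.2.2) ∘ e
        = fun i => rename e (stepFun M F t i) := by
      funext i
      by_cases hi : i = t.1
      · simp [stepFun, hi]
      · have : e i ≠ e t.1 := fun h => hi (he h)
        simp [stepFun, hi, this]
    rw [this]
    show _ = ((rename e).comp (aeval (stepFun M F t))) q
    rw [comp_aeval]

/-- building a product of ≥ 2 variables from a single fresh variable -/
lemma chain (s : Multiset (Fin n)) (i j : Fin n) :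
    ∃ L : List (Fin (n+1) × Fin (n+1) × Fin (n+1)),
      (∀ t ∈ L, t.1 = Fin.last n) ∧
      fold L (X (Fin.last n) : MvPolynomial (Fin (n+1)) F)
        = ((i ::ₘ j ::ₘ s).map fun k => (X (Fin.castLE (Nat.le_succ n) k) :
            MvPolynomial (Fin (n+1)) F)).prod := by
  have hne : ∀ k : Fin n, Fin.castLE (Nat.le_succ n) k ≠ Fin.last n := by
    intro k h
    have := congrArg Fin.val h
    simp at this
    omega
  induction s using Multiset.induction generalizing i j with
  | empty =>
    refine ⟨[(Fin.last n, Fin.castLE (Nat.le_succ n) i, Fin.castLE (Nat.le_succ n) j)],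
      by simp, ?_⟩
    simp [fold, stepFun, aeval_X, mul_comm]
  | cons k s ih =>
    obtain ⟨L, hL, hfold⟩ := ih j k
    refine ⟨(Fin.last n, Fin.last n, Fin.castLE (Nat.le_succ n) i) :: L,
      by simpa using fun a b c h => hL (a,b,c) h, ?_⟩
    have hfix : fold L (X (Fin.castLE (Nat.le_succ n) i) : MvPolynomial (Fin (n+1)) F)
        = X (Fin.castLE (Nat.le_succ n) i) := by
      refine fold_X_ne L _ fun t ht => ?_
      rw [hL t ht]
      exact (hne i).symm
    rw [fold_cons, aeval_X, stepFun, if_pos rfl, fold_mul, hfold, hfix]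
    simp [Multiset.map_cons, Multiset.prod_cons, mul_comm, mul_assoc, mul_left_comm]

end PolyReal

namespace PolyReal

variable {F : Type*} [Field F] {n : ℕ}

lemma prod_toMultiset_map {σ : Type*} {M : Type*} [CommMonoid M] (f : σ →₀ ℕ) (g : σ → M) :
    (f.toMultiset.map g).prod = f.prod fun a e => g a ^ e := by
  rw [Finsupp.toMultiset_map, Finsupp.prod_toMultiset,
    Finsupp.prod_mapDomain_index (fun b => pow_zero b) (fun b m₁ m₂ => pow_add b m₁ m₂)]

def Realizable (p : MvPolynomial (Fin n) F) : Prop :=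
  ∃ (N : ℕ) (hn : n ≤ N) (q : MvPolynomial (Fin N) F) (L : List (Fin N × Fin N × Fin N)),
    q.totalDegree ≤ 1 ∧ (∀ t ∈ L, n ≤ (t.1 : ℕ)) ∧ fold L q = rename (Fin.castLE hn) p

lemma realizable_monomial (m : Fin n →₀ ℕ) (a : F) : Realizable (monomial m a) := by
  by_cases h : (m.sum fun _ e => e) ≤ 1
  · exact ⟨n, le_rfl, rename (Fin.castLE le_rfl) (monomial m a), [],
      le_trans (totalDegree_rename_le _ _) (le_trans (totalDegree_monomial_le _ _) h),
      by simp, rfl⟩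
  · have hcard : 2 ≤ Multiset.card m.toMultiset := by
      rw [Finsupp.card_toMultiset]
      have he : (m.sum fun _ => id) = m.sum fun _ e => e := rfl
      omega
    obtain ⟨i, hi⟩ := Multiset.exists_mem_of_ne_zero (s := m.toMultiset)
      (by intro h0; rw [h0] at hcard; simp at hcard)
    obtain ⟨t, hit⟩ := Multiset.exists_cons_of_mem hi
    have ht0 : t ≠ 0 := by
      intro h0
      rw [h0] at hit
      have := congrArg Multiset.card hit
      simp only [Multiset.card_cons, Multiset.card_zero] at this
      omega
    obtain ⟨j, hj⟩ := Multiset.exists_mem_of_ne_zero ht0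
    obtain ⟨s, hjs⟩ := Multiset.exists_cons_of_mem hj
    have hms : m.toMultiset = i ::ₘ j ::ₘ s := by rw [hit, hjs]
    obtain ⟨L, hL, hfold⟩ := chain (F := F) s i j
    set c : Fin n → Fin (n+1) := Fin.castLE (Nat.le_succ n) with hc
    refine ⟨n+1, Nat.le_succ n, C a * X (Fin.last n), L, ?_, ?_, ?_⟩
    · calc (C a * X (Fin.last n) : MvPolynomial (Fin (n+1)) F).totalDegree
          ≤ (C a : MvPolynomial (Fin (n+1)) F).totalDegree + (X (Fin.last n) :
            MvPolynomial (Fin (n+1)) F).totalDegree := totalDegree_mul _ _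
        _ ≤ 1 := by rw [totalDegree_C, totalDegree_X]
    · intro t ht; rw [hL t ht]; simp
    · rw [fold_mul, fold_C, hfold, ← hms]
      rw [rename_monomial, monomial_eq]
      congr 1
      have : (m.toMultiset.map fun k => (X (c k) : MvPolynomial (Fin (n+1)) F)).prod
          = ((m.toMultiset.map c).map fun k => (X k : MvPolynomial (Fin (n+1)) F)).prod := by
        rw [Multiset.map_map]; rfl
      rw [this, Finsupp.toMultiset_map, prod_toMultiset_map]

lemma realizable_add (p₁ p₂ : MvPolynomial (Fin n) F)
    (h₁ : Realizable p₁) (h₂ : Realizable p₂) : Realizable (p₁ + p₂) := by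
  obtain ⟨N₁, hn₁, q₁, L₁, hd₁, ht₁, hf₁⟩ := h₁
  obtain ⟨N₂, hn₂, q₂, L₂, hd₂, ht₂, hf₂⟩ := h₂
  have hnN : n ≤ N₁ + N₂ := by omega
  let e₁ : Fin N₁ → Fin (N₁ + N₂) := Fin.castLE (by omega)
  let e₂ : Fin N₂ → Fin (N₁ + N₂) := fun i =>
    ⟨if (i : ℕ) < n then (i : ℕ) else N₁ + (i : ℕ), by split <;> omega⟩
  have hv₁ : ∀ i : Fin N₁, ((e₁ i : Fin (N₁ + N₂)) : ℕ) = (i : ℕ) := fun i => rfl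
  have hv₂ : ∀ i : Fin N₂, ((e₂ i : Fin (N₁ + N₂)) : ℕ)
      = if (i : ℕ) < n then (i : ℕ) else N₁ + (i : ℕ) := fun i => rfl
  have he₁inj : Function.Injective e₁ := fun a b h => Fin.ext (by
    have := congrArg Fin.val h; rwa [hv₁, hv₁] at this)
  have he₂inj : Function.Injective e₂ := by
    intro a b h
    have := congrArg Fin.val h
    rw [hv₂, hv₂] at this
    have ha := a.isLt; have hb := b.isLt
    apply Fin.ext
    split at this <;> split at this <;> omega
  refine ⟨N₁ + N₂, hnN, rename e₁ q₁ + rename e₂ q₂,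
    (L₁.map fun t => (e₁ t.1, e₁ t.2.1, e₁ t.2.2))
      ++ (L₂.map fun t => (e₂ t.1, e₂ t.2.1, e₂ t.2.2)), ?_, ?_, ?_⟩
  · refine le_trans (totalDegree_add _ _) (max_le ?_ ?_) <;>
      exact le_trans (totalDegree_rename_le _ _) (by assumption)
  · intro t ht
    rcases List.mem_append.mp ht with h | h <;> obtain ⟨s, hs, rfl⟩ := List.mem_map.mp h
    · show n ≤ ((e₁ s.1 : Fin (N₁ + N₂)) : ℕ)
      rw [hv₁]
      exact ht₁ s hs
    · show n ≤ ((e₂ s.1 : Fin (N₁ + N₂)) : ℕ)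
      rw [hv₂]
      have := ht₂ s hs
      split <;> omega
  · have hfoldapp : ∀ (A B : List (Fin (N₁+N₂) × Fin (N₁+N₂) × Fin (N₁+N₂)))
        (q : MvPolynomial (Fin (N₁+N₂)) F),
        fold (A ++ B) q = fold B (fold A q) := fun A B q => List.foldl_append
    rw [hfoldapp, fold_add, fold_add]
    have hcomp₁ : e₁ ∘ Fin.castLE hn₁ = Fin.castLE hnN := by
      funext i; exact Fin.ext rfl
    have hcomp₂ : e₂ ∘ Fin.castLE hn₂ = Fin.castLE hnN := by
      funext i
      apply Fin.ext
      show (if ((i : ℕ) < n) then (i : ℕ) else N₁ + (i : ℕ)) = (i : ℕ)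
      rw [if_pos i.isLt]
    have h1a : fold (L₁.map fun t => (e₁ t.1, e₁ t.2.1, e₁ t.2.2)) (rename e₁ q₁)
        = rename (Fin.castLE hnN) p₁ := by
      rw [fold_rename e₁ he₁inj, hf₁, rename_rename, hcomp₁]
    have h1b : fold (L₁.map fun t => (e₁ t.1, e₁ t.2.1, e₁ t.2.2)) (rename e₂ q₂)
        = rename e₂ q₂ := by
      refine fold_fix e₂ _ ?_ q₂
      intro t ht i
      obtain ⟨s, hs, rfl⟩ := List.mem_map.mp ht
      have hts := ht₁ s hs
      intro hcontra
      have hval : ((e₂ i : Fin (N₁+N₂)) : ℕ) = ((e₁ s.1 : Fin (N₁+N₂)) : ℕ) :=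
        congrArg Fin.val hcontra
      rw [hv₁, hv₂] at hval
      have hs1 := s.1.isLt
      have hi := i.isLt
      split at hval <;> omega
    have h2a : fold (L₂.map fun t => (e₂ t.1, e₂ t.2.1, e₂ t.2.2))
        (rename (Fin.castLE hnN) p₁) = rename (Fin.castLE hnN) p₁ := by
      refine fold_fix _ _ ?_ p₁
      intro t ht i
      obtain ⟨s, hs, rfl⟩ := List.mem_map.mp ht
      have hts := ht₂ s hs
      intro hcontra
      have hval : ((Fin.castLE hnN i : Fin (N₁+N₂)) : ℕ) = ((e₂ s.1 : Fin (N₁+N₂)) : ℕ) :=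
        congrArg Fin.val hcontra
      rw [hv₂] at hval
      have hi := i.isLt
      simp only [Fin.coe_castLE] at hval
      split at hval <;> omega
    have h2b : fold (L₂.map fun t => (e₂ t.1, e₂ t.2.1, e₂ t.2.2)) (rename e₂ q₂)
        = rename (Fin.castLE hnN) p₂ := by
      rw [fold_rename e₂ he₂inj, hf₂, rename_rename, hcomp₂]
    rw [h1a, h1b, h2a, h2b, map_add]

lemma realizable (p : MvPolynomial (Fin n) F) : Realizable p := by
  induction p using MvPolynomial.induction_on' with
  | monomial m a => exact realizable_monomial m a
  | add p q hp hq => exact realizable_add p q hp hq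

end PolyReal

open MvPolynomial in
theorem polynomial_realization {F : Type*} [Field F] {n : ℕ}
    (p : MvPolynomial (Fin n) F) :
    ∃ (N : ℕ) (hn : n ≤ N) (q : MvPolynomial (Fin N) F)
      (L : List (Fin N × Fin N × Fin N)),
      q.totalDegree ≤ 1 ∧
      L.foldl (fun r t =>
          MvPolynomial.aeval (fun i : Fin N =>
            if i = t.1 then (X t.2.1 * X t.2.2 : MvPolynomial (Fin N) F) else X i) r) q
        = MvPolynomial.rename (Fin.castLE hn) p := by
  obtain ⟨N, hn, q, L, hd, -, hf⟩ := PolyReal.realizable p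
  exact ⟨N, hn, q, L, hd, hf⟩
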